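/- (General IV estimand with arbitrary skill dynamics.) Suppose cov(θ_t, ε_{t'}) = 0 for all integers t, t' and cov(ε_t, ε_{t'}) = 0 whenever |t − t'| ≥ k. Then for all integers t, t' with either t − t' ≥ k + 1 or t' − t ≥ k, if cov(w_{t−1}, w_{t'}) ≠ 0, then cov(w_t − w_{t−1}, w_{t'}) / cov(w_{t−1}, w_{t'}) = (μ_t − μ_{t−1}) / μ_{t−1} + (μ_t / μ_{t−1}) · cov(θ_t − θ_{t−1}, θ_{t'}) / cov(θ_{t−1}, θ_{t'}); in particular μ_{t−1} ≠ 0 and cov(θ_{t−1}, θ_{t'}) ≠ 0. -/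

import Mathlib

open MeasureTheory ProbabilityTheory

/-- Covariance of two real-valued random variables under measure `P`. -/
noncomputable def cov {Ω : Type*} [MeasurableSpace Ω] (P : Measure Ω) (X Y : Ω → ℝ) : ℝ :=
  ∫ ω, (X ω - ∫ a, X a ∂P) * (Y ω - ∫ a, Y a ∂P) ∂P

/-- Variance of a real-valued random variable under measure `P`. -/
noncomputable def Var {Ω : Type*} [MeasurableSpace Ω] (P : Measure Ω) (X : Ω → ℝ) : ℝ :=
  cov P X X

section Aux

variable {Ω : Type*} [MeasurableSpace Ω] {P : Measure Ω} [IsProbabilityMeasure P]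

omit [IsProbabilityMeasure P] in
lemma integrable_mul_of_memL2 {f g : Ω → ℝ} (hf : MemLp f 2 P) (hg : MemLp g 2 P) :
    Integrable (fun ω => f ω * g ω) P := by
  have h := L2.integrable_inner (𝕜 := ℝ) (hf.toLp f) (hg.toLp g)
  refine h.congr ?_
  filter_upwards [hf.coeFn_toLp, hg.coeFn_toLp] with ω h1 h2
  simp [RCLike.inner_apply, h1, h2, mul_comm]

lemma integrable_centered_mul {f g : Ω → ℝ} (hf : MemLp f 2 P) (hg : MemLp g 2 P) :
    Integrable (fun ω => (f ω - ∫ a, f a ∂P) * (g ω - ∫ a, g a ∂P)) P :=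
  integrable_mul_of_memL2 (hf.sub (memLp_const _)) (hg.sub (memLp_const _))

omit [IsProbabilityMeasure P] in
lemma cov_comm (X Y : Ω → ℝ) : cov P X Y = cov P Y X := by
  unfold cov; refine integral_congr_ae (.of_forall fun ω => ?_); ring

omit [IsProbabilityMeasure P] in
lemma cov_smul_left (c : ℝ) (X Y : Ω → ℝ) :
    cov P (fun ω => c * X ω) Y = c * cov P X Y := by
  unfold cov
  rw [integral_const_mul (μ := P) c X,
    ← integral_const_mul c fun ω => (X ω - ∫ a, X a ∂P) * (Y ω - ∫ a, Y a ∂P)]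
  refine integral_congr_ae (.of_forall fun ω => ?_); ring

lemma cov_add_left {X X' Y : Ω → ℝ} (hX : MemLp X 2 P) (hX' : MemLp X' 2 P)
    (hY : MemLp Y 2 P) :
    cov P (fun ω => X ω + X' ω) Y = cov P X Y + cov P X' Y := by
  unfold cov
  rw [integral_add (hX.integrable one_le_two) (hX'.integrable one_le_two),
    ← integral_add (integrable_centered_mul hX hY) (integrable_centered_mul hX' hY)]
  refine integral_congr_ae (.of_forall fun ω => ?_); ring

lemma cov_sub_left {X X' Y : Ω → ℝ} (hX : MemLp X 2 P) (hX' : MemLp X' 2 P)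
    (hY : MemLp Y 2 P) :
    cov P (fun ω => X ω - X' ω) Y = cov P X Y - cov P X' Y := by
  unfold cov
  rw [integral_sub (hX.integrable one_le_two) (hX'.integrable one_le_two),
    ← integral_sub (integrable_centered_mul hX hY) (integrable_centered_mul hX' hY)]
  refine integral_congr_ae (.of_forall fun ω => ?_); ring

end Aux

/-- General IV estimand with arbitrary skill dynamics: using past (`t - t' ≥ k + 1`) or
future (`t' - t ≥ k`) residuals as instruments, the IV estimand equals the return growth
plus a skill-dynamics bias term. -/
theorem IV_estimand_general_skill_dynamics
    {Ω : Type*} [MeasurableSpace Ω] (P : Measure Ω) [IsProbabilityMeasure P]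
    (θ ε : ℤ → Ω → ℝ) (μ : ℤ → ℝ) (w : ℤ → Ω → ℝ)
    (hθ : ∀ t, MemLp (θ t) 2 P) (hε : ∀ t, MemLp (ε t) 2 P)
    (hw : ∀ t ω, w t ω = μ t * θ t ω + ε t ω)
    (k : ℕ) (hk : 1 ≤ k)
    (hθε : ∀ t t' : ℤ, cov P (θ t) (ε t') = 0)
    (hεε : ∀ t t' : ℤ, (k : ℤ) ≤ |t - t'| → cov P (ε t) (ε t') = 0) :
    ∀ t t' : ℤ, ((k : ℤ) + 1 ≤ t - t' ∨ (k : ℤ) ≤ t' - t) →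
      cov P (w (t - 1)) (w t') ≠ 0 →
      μ (t - 1) ≠ 0 ∧ cov P (θ (t - 1)) (θ t') ≠ 0 ∧
        cov P (fun ω => w t ω - w (t - 1) ω) (w t') / cov P (w (t - 1)) (w t') =
          (μ t - μ (t - 1)) / μ (t - 1) +
            (μ t / μ (t - 1)) *
              (cov P (fun ω => θ t ω - θ (t - 1) ω) (θ t') / cov P (θ (t - 1)) (θ t')) := by
  -- MemLp facts
  have hwfun : ∀ s : ℤ, w s = fun ω => μ s * θ s ω + ε s ω := fun s => funext (hw s)
  have hwm : ∀ s : ℤ, MemLp (w s) 2 P := by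
    intro s; rw [hwfun s]; exact ((hθ s).const_mul (μ s)).add (hε s)
  -- covariance of residuals in terms of skills
  have cov_w : ∀ s u : ℤ, (k : ℤ) ≤ |s - u| →
      cov P (w s) (w u) = μ s * μ u * cov P (θ s) (θ u) := by
    intro s u hsu
    rw [hwfun s, hwfun u]
    have hWu : MemLp (fun ω => μ u * θ u ω + ε u ω) 2 P :=
      ((hθ u).const_mul (μ u)).add (hε u)
    rw [cov_add_left ((hθ s).const_mul (μ s)) (hε s) hWu, cov_smul_left]
    have h1 : cov P (θ s) (fun ω => μ u * θ u ω + ε u ω) = μ u * cov P (θ s) (θ u) := by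
      rw [cov_comm, cov_add_left ((hθ u).const_mul (μ u)) (hε u) (hθ s), cov_smul_left,
        cov_comm (ε u), hθε s u, cov_comm]
      ring
    have h2 : cov P (ε s) (fun ω => μ u * θ u ω + ε u ω) = 0 := by
      rw [cov_comm, cov_add_left ((hθ u).const_mul (μ u)) (hε u) (hε s), cov_smul_left,
        hθε u s, cov_comm (ε u) (ε s), hεε s u hsu]
      ring
    rw [h1, h2]; ring
  intro t t' ht hne
  have habs1 : (k : ℤ) ≤ |t - 1 - t'| := by
    rcases ht with h | h
    · exact le_abs.mpr (Or.inl (by omega))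
    · exact le_abs.mpr (Or.inr (by omega))
  have habs2 : (k : ℤ) ≤ |t - t'| := by
    rcases ht with h | h
    · exact le_abs.mpr (Or.inl (by omega))
    · exact le_abs.mpr (Or.inr (by omega))
  have hA : cov P (w (t - 1)) (w t') = μ (t - 1) * μ t' * cov P (θ (t - 1)) (θ t') :=
    cov_w _ _ habs1
  have hB : cov P (w t) (w t') = μ t * μ t' * cov P (θ t) (θ t') :=
    cov_w _ _ habs2
  have hμ1 : μ (t - 1) ≠ 0 := by
    intro h; apply hne; rw [hA, h]; ring
  have hμ' : μ t' ≠ 0 := by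
    intro h; apply hne; rw [hA, h]; ring
  have hC : cov P (θ (t - 1)) (θ t') ≠ 0 := by
    intro h; apply hne; rw [hA, h]; ring
  refine ⟨hμ1, hC, ?_⟩
  rw [cov_sub_left (hwm t) (hwm (t - 1)) (hwm t'),
    cov_sub_left (hθ t) (hθ (t - 1)) (hθ t'), hA, hB]
  field_simp
  ring
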